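/- Let W be a finite-dimensional real vector space, Π : W* × W* → ℝ an alternating bilinear form on the dual, and Π# : W* → W the linear map determined by ξ(Π#(η)) = Π(ξ,η) for all ξ, η ∈ W* (using the canonical identification of W with its double dual). Let L_Π = {(Π#(ξ), ξ) : ξ ∈ W*} be the graph of Π. For a subspace V ⊆ W, one has (V × V⁰) ∩ L_Π = {0} if and only if the restriction of Π to V⁰ × V⁰ is non-degenerate. -/

import Mathlib

/-- for an alternating bilinear form `Pb` on `W*` with
`ξ(Pbs(η)) = Pb(ξ,η)` and graph `L_Π = {(Pbs(ξ), ξ)}`, one has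
`(V × V⁰) ∩ L_Π = {0}` iff the restriction of `Pb` to `V⁰ × V⁰` is non-degenerate. -/
theorem stmt17 {W : Type*} [AddCommGroup W] [Module ℝ W] [FiniteDimensional ℝ W]
    (Pb : Module.Dual ℝ W →ₗ[ℝ] Module.Dual ℝ W →ₗ[ℝ] ℝ) (hPb : ∀ ξ, Pb ξ ξ = 0)
    (Pbs : Module.Dual ℝ W →ₗ[ℝ] W) (hPbs : ∀ ξ η, ξ (Pbs η) = Pb ξ η)
    (V : Submodule ℝ W) :
    V.prod V.dualAnnihilator ⊓ LinearMap.range (LinearMap.prod Pbs LinearMap.id) = ⊥ ↔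
      ∀ ξ ∈ V.dualAnnihilator, ξ ≠ 0 → ∃ η ∈ V.dualAnnihilator, Pb ξ η ≠ 0 := by
  have hskew : ∀ ξ η, Pb ξ η = -Pb η ξ := by
    intro ξ η
    have h := hPb (ξ + η)
    simp only [map_add, LinearMap.add_apply, hPb ξ, hPb η] at h
    linarith
  constructor
  · intro h ξ hξ hξ0
    by_contra hc
    push_neg at hc
    have hmem : (Pbs ξ, ξ) ∈ V.prod V.dualAnnihilator ⊓
        LinearMap.range (LinearMap.prod Pbs LinearMap.id) := by
      refine ⟨⟨?_, hξ⟩, ⟨ξ, rfl⟩⟩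
      have : Pbs ξ ∈ V.dualAnnihilator.dualCoannihilator := by
        rw [Submodule.mem_dualCoannihilator]
        intro η hη
        rw [hPbs, hskew, hc η hη, neg_zero]
      rwa [Subspace.dualAnnihilator_dualCoannihilator_eq] at this
    rw [h, Submodule.mem_bot] at hmem
    exact hξ0 (by simpa using congrArg Prod.snd hmem)
  · intro h
    rw [eq_bot_iff]
    rintro ⟨w, ξ⟩ ⟨⟨hwV, hξ⟩, ⟨η, hη⟩⟩
    simp only [LinearMap.prod_apply, Function.prod, LinearMap.id_apply, Prod.mk.injEq] at hη
    obtain ⟨hw, rfl⟩ := hη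
    have hξ0 : η = 0 := by
      by_contra hne
      obtain ⟨ρ, hρ, hρne⟩ := h η hξ hne
      have : Pb η ρ = 0 := by
        rw [hskew, ← hPbs, hw]
        rw [Submodule.mem_dualAnnihilator] at hρ
        rw [hρ w hwV, neg_zero]
      rw [hskew] at hρne
      rw [hskew] at this
      exact hρne (by linarith)
    subst hξ0
    simp [Submodule.mem_bot, Prod.ext_iff, ← hw]
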